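/- (Shintani, real quadratic case) Let $F$ be a real quadratic field embedded in $\mathbb{R}^2$ via its two real embeddings, and let $\varepsilon > 1$ be a totally positive unit generating a finite-index subgroup $E = \langle\varepsilon\rangle$ of the totally positive units. Then the set $D = \{a \cdot 1 + b\varepsilon : a > 0, b \geq 0\} \subset \mathbb{R}^2_{>0}$ (the open cone on $1, \varepsilon$ together with the open ray through $1$) is a fundamental domain for the multiplication action of $E$ on $\mathbb{R}^2_{>0}$: the sets $\varepsilon^k D$, $k \in \mathbb{Z}$, are pairwise disjoint and their union is $\mathbb{R}^2_{>0}$. -/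

import Mathlib

open NumberField

/-- **Shintani's fundamental domain, real quadratic case.** Let `F` be a real quadratic
field with real embeddings `τ₁, τ₂`, and `ε` a totally positive unit with `τ₁(ε) > 1`.
Then `D = {a·(1,1) + b·(τ₁ε, τ₂ε) : a > 0, b ≥ 0}` is a fundamental domain for the
action of `⟨ε⟩` on `ℝ²_{>0}` by componentwise multiplication: the translates `εᵏ·D`,
`k ∈ ℤ`, are pairwise disjoint with union `ℝ²_{>0}`. -/
lemma aux_prod_norm (F : Type*) [Field F] [NumberField F]
    (hdeg : Module.finrank ℚ F = 2)
    (τ₁ τ₂ : F →+* ℝ) (hττ : τ₁ ≠ τ₂) (x : F) :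
    τ₁ x * τ₂ x = ((Algebra.norm ℚ x : ℚ) : ℝ) := by
  classical
  set σ₁ : F →ₐ[ℚ] ℂ := (Complex.ofRealHom.comp τ₁).toRatAlgHom with hσ₁
  set σ₂ : F →ₐ[ℚ] ℂ := (Complex.ofRealHom.comp τ₂).toRatAlgHom with hσ₂
  have hne : σ₁ ≠ σ₂ := by
    intro h
    apply hττ
    ext y
    have := congrArg (fun f => f y) h
    simpa [hσ₁, hσ₂, RingHom.toRatAlgHom, Complex.ofReal_inj] using this
  have hcard : Fintype.card (F →ₐ[ℚ] ℂ) = 2 := by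
    rw [AlgHom.card]; exact hdeg
  have huniv : (Finset.univ : Finset (F →ₐ[ℚ] ℂ)) = {σ₁, σ₂} := by
    symm
    apply Finset.eq_of_subset_of_card_le (Finset.subset_univ _)
    rw [Finset.card_univ, hcard, Finset.card_insert_of_notMem (by simpa using hne),
      Finset.card_singleton]
  have hprod := Algebra.norm_eq_prod_embeddings ℚ ℂ x
  rw [huniv, Finset.prod_pair hne] at hprod
  have : ((τ₁ x * τ₂ x : ℝ) : ℂ) = (((Algebra.norm ℚ x : ℚ) : ℝ) : ℂ) := by
    push_cast
    rw [show ((algebraMap ℚ ℂ) ((Algebra.norm ℚ) x) : ℂ) = ((Algebra.norm ℚ x : ℚ) : ℂ) from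
      eq_ratCast _ _] at hprod
    rw [hprod, hσ₁, hσ₂]
    rfl
  exact_mod_cast this

theorem stmt16 (F : Type*) [Field F] [NumberField F]
    (hdeg : Module.finrank ℚ F = 2)
    (τ₁ τ₂ : F →+* ℝ) (hττ : τ₁ ≠ τ₂)
    (ε : (𝓞 F)ˣ)
    (hpos₁ : 0 < τ₁ (algebraMap (𝓞 F) F (ε : 𝓞 F)))
    (hpos₂ : 0 < τ₂ (algebraMap (𝓞 F) F (ε : 𝓞 F)))
    (hbig : 1 < τ₁ (algebraMap (𝓞 F) F (ε : 𝓞 F))) :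
    let e₁ : ℤ → ℝ := fun k => τ₁ (algebraMap (𝓞 F) F ((ε ^ k : (𝓞 F)ˣ) : 𝓞 F))
    let e₂ : ℤ → ℝ := fun k => τ₂ (algebraMap (𝓞 F) F ((ε ^ k : (𝓞 F)ˣ) : 𝓞 F))
    let D : Set (ℝ × ℝ) := {x | ∃ a b : ℝ, 0 < a ∧ 0 ≤ b ∧
      x = (a + b * e₁ 1, a + b * e₂ 1)}
    let T : ℤ → Set (ℝ × ℝ) := fun k => (fun x : ℝ × ℝ => (e₁ k * x.1, e₂ k * x.2)) '' D
    (Set.univ : Set ℤ).PairwiseDisjoint T ∧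
      (⋃ k : ℤ, T k) = {x : ℝ × ℝ | 0 < x.1 ∧ 0 < x.2} := by
  intro e₁ e₂ D T
  set t : ℝ := τ₁ (algebraMap (𝓞 F) F (ε : 𝓞 F)) with htdef
  set s : ℝ := τ₂ (algebraMap (𝓞 F) F (ε : 𝓞 F)) with hsdef
  have ht0 : 0 < t := hpos₁
  have ht1 : 1 < t := hbig
  have hs0 : 0 < s := hpos₂
  -- the product of the two embeddings of a totally positive unit is 1
  have hts : t * s = 1 := by
    have habs := NumberField.isUnit_iff_norm.mp ε.isUnit
    rw [RingOfIntegers.coe_norm] at habs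
    have hps := aux_prod_norm F hdeg τ₁ τ₂ hττ (algebraMap (𝓞 F) F (ε : 𝓞 F))
    have hcoe : ((ε : 𝓞 F) : F) = algebraMap (𝓞 F) F (ε : 𝓞 F) := rfl
    rw [hcoe] at habs
    rcases abs_eq (le_of_lt one_pos) |>.mp habs with h1 | h1
    · rw [← htdef, ← hsdef, h1] at hps; simpa using hps
    · exfalso
      rw [← htdef, ← hsdef, h1] at hps
      push_cast at hps
      nlinarith
  have hs1 : s < 1 := by nlinarith
  have hst : s < t := lt_trans hs1 ht1
  -- zpow formula for the embeddings
  have key : ∀ (τ : F →+* ℝ) (k : ℤ),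
      τ (algebraMap (𝓞 F) F ((ε ^ k : (𝓞 F)ˣ) : 𝓞 F))
        = (τ (algebraMap (𝓞 F) F (ε : 𝓞 F))) ^ k := by
    intro τ k
    have h1 : τ (algebraMap (𝓞 F) F ((ε ^ k : (𝓞 F)ˣ) : 𝓞 F))
        = ((Units.map ((τ.comp (algebraMap (𝓞 F) F)).toMonoidHom) (ε ^ k) : ℝˣ) : ℝ) := rfl
    rw [h1, map_zpow, Units.val_zpow_eq_zpow_val]
    rfl
  have he₁ : ∀ k : ℤ, e₁ k = t ^ k := fun k => key τ₁ k
  have he₂ : ∀ k : ℤ, e₂ k = s ^ k := fun k => key τ₂ k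
  have he₁1 : e₁ 1 = t := by rw [he₁ 1, zpow_one]
  have he₂1 : e₂ 1 = s := by rw [he₂ 1, zpow_one]
  have h2m : ∀ m : ℤ, t ^ (2 * m) = t ^ m * t ^ m := by
    intro m; rw [two_mul, zpow_add₀ ht0.ne']
  -- characterization of the translates
  have hmem : ∀ (k : ℤ) (p : ℝ × ℝ),
      p ∈ T k ↔ 0 < p.2 ∧ p.2 * t ^ (2 * k) ≤ p.1 ∧ p.1 < p.2 * t ^ (2 * k + 2) := by
    intro k p
    have hP : (0:ℝ) < t ^ k := zpow_pos ht0 k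
    have hQ : (0:ℝ) < s ^ k := zpow_pos hs0 k
    have hPQ : t ^ k * s ^ k = 1 := by
      rw [← mul_zpow, hts, one_zpow]
    have h2k2 : t ^ (2 * k + 2) = t ^ k * t ^ k * (t * t) := by
      rw [zpow_add₀ ht0.ne', h2m k]; norm_num [zpow_two, pow_two]
    constructor
    · rintro ⟨⟨u, v⟩, ⟨a, b, ha, hb, huv⟩, rfl⟩
      rw [Prod.mk.injEq] at huv
      obtain ⟨hu, hv⟩ := huv
      simp only [he₁, he₂, he₁1, he₂1, zpow_one] at hu hv ⊢
      subst hu hv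
      have htt1 : 1 < t * t := by nlinarith
      refine ⟨mul_pos hQ (by nlinarith [mul_nonneg hb hs0.le]), ?_, ?_⟩
      · rw [h2m k]
        have hvu : a + b * s ≤ a + b * t := by nlinarith
        calc s ^ k * (a + b * s) * (t ^ k * t ^ k)
            = (a + b * s) * t ^ k * (t ^ k * s ^ k) := by ring
          _ = (a + b * s) * t ^ k := by rw [hPQ, mul_one]
          _ ≤ (a + b * t) * t ^ k := mul_le_mul_of_nonneg_right hvu hP.le
          _ = t ^ k * (a + b * t) := mul_comm _ _
      · rw [h2k2]
        have e1 : (a + b * s) * (t * t) = a * (t * t) + b * t := by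
          linear_combination (b * t) * hts
        have hu2 : a + b * t < (a + b * s) * (t * t) := by
          rw [e1]; nlinarith [mul_pos ha (sub_pos.mpr htt1)]
        calc t ^ k * (a + b * t)
            < t ^ k * ((a + b * s) * (t * t)) := by
              exact mul_lt_mul_of_pos_left hu2 hP
          _ = t ^ k * ((a + b * s) * (t * t)) * (t ^ k * s ^ k) := by rw [hPQ, mul_one]
          _ = s ^ k * (a + b * s) * (t ^ k * t ^ k * (t * t)) := by ring
    · rintro ⟨hy, h1, h2⟩
      obtain ⟨x, y⟩ := p
      simp only at hy h1 h2
      set d : ℝ := t - s with hd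
      have hd0 : 0 < d := by simp [hd]; linarith
      set u : ℝ := s ^ k * x with hu
      set v : ℝ := t ^ k * y with hv
      rw [h2m k] at h1
      rw [h2k2] at h2
      have hvu : v ≤ u := by
        rw [hu, hv]
        calc t ^ k * y = t ^ k * y * (t ^ k * s ^ k) := by rw [hPQ, mul_one]
          _ = s ^ k * (y * (t ^ k * t ^ k)) := by ring
          _ ≤ s ^ k * x := mul_le_mul_of_nonneg_left h1 hQ.le
      have huv2 : u < v * (t * t) := by
        rw [hu, hv]
        calc s ^ k * x < s ^ k * (y * (t ^ k * t ^ k * (t * t))) :=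
              mul_lt_mul_of_pos_left h2 hQ
          _ = t ^ k * y * (t * t) * (t ^ k * s ^ k) := by ring
          _ = t ^ k * y * (t * t) := by rw [hPQ, mul_one]
      refine ⟨(u, v), ⟨(t * v - s * u) / d, (u - v) / d, ?_, ?_, ?_⟩, ?_⟩
      · apply div_pos _ hd0
        have h3 := mul_lt_mul_of_pos_left huv2 hs0
        have h4 : s * (v * (t * t)) = t * v := by linear_combination (v * t) * hts
        linarith
      · apply div_nonneg _ hd0.le
        linarith
      · rw [Prod.mk.injEq, he₁1, he₂1]
        constructor
        · field_simp
          ring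
        · field_simp
          ring
      · simp only [he₁, he₂, hu, hv, Prod.mk.injEq]
        constructor
        · calc t ^ k * (s ^ k * x) = x * (t ^ k * s ^ k) := by ring
            _ = x := by rw [hPQ, mul_one]
        · calc s ^ k * (t ^ k * y) = y * (t ^ k * s ^ k) := by ring
            _ = y := by rw [hPQ, mul_one]
  -- main disjointness statement
  have hdisj : ∀ k l : ℤ, k < l → ∀ p : ℝ × ℝ, p ∈ T k → p ∉ T l := by
    intro k l hkl p hk hl
    rw [hmem k p] at hk
    rw [hmem l p] at hl
    obtain ⟨hy, hk1, hk2⟩ := hk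
    obtain ⟨-, hl1, hl2⟩ := hl
    have hle : t ^ (2 * k + 2) ≤ t ^ (2 * l) :=
      zpow_le_zpow_right₀ ht1.le (by omega)
    have : p.2 * t ^ (2 * k + 2) ≤ p.2 * t ^ (2 * l) :=
      mul_le_mul_of_nonneg_left hle hy.le
    linarith
  constructor
  · intro k _ l _ hkl
    have : Disjoint (T k) (T l) := by
      rw [Set.disjoint_left]
      intro p hpk hpl
      rcases lt_or_gt_of_ne hkl with h | h
      · exact hdisj k l h p hpk hpl
      · exact hdisj l k h p hpl hpk
    exact this
  · ext p
    simp only [Set.mem_iUnion, Set.mem_setOf_eq]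
    constructor
    · rintro ⟨k, hk⟩
      rw [hmem k p] at hk
      obtain ⟨hy, h1, -⟩ := hk
      exact ⟨lt_of_lt_of_le (mul_pos hy (zpow_pos ht0 _)) h1, hy⟩
    · rintro ⟨hx, hy⟩
      set B : ℝ := t * t with hB
      have hB1 : 1 < B := by nlinarith
      have hB0 : 0 < B := by linarith
      set r : ℝ := p.1 / p.2 with hr
      have hr0 : 0 < r := div_pos hx hy
      refine ⟨⌊Real.logb B r⌋, ?_⟩
      set k : ℤ := ⌊Real.logb B r⌋ with hk
      rw [hmem k p]
      have hBk : ∀ m : ℤ, t ^ (2 * m) = B ^ m := by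
        intro m
        rw [hB, ← zpow_two, ← zpow_mul]
      have hrpow : ∀ m : ℤ, B ^ m = B ^ (m : ℝ) := by
        intro m; rw [Real.rpow_intCast]
      have hlow : B ^ k ≤ r := by
        rw [hrpow k]
        calc B ^ (k : ℝ) ≤ B ^ Real.logb B r := by
              apply Real.rpow_le_rpow_of_exponent_le hB1.le
              exact Int.floor_le _
          _ = r := Real.rpow_logb hB0 hB1.ne' hr0
      have hhigh : r < B ^ (k + 1) := by
        rw [hrpow (k + 1)]
        calc r = B ^ Real.logb B r := (Real.rpow_logb hB0 hB1.ne' hr0).symm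
          _ < B ^ ((k : ℝ) + 1) := by
              apply Real.rpow_lt_rpow_of_exponent_lt hB1
              exact Int.lt_floor_add_one _
          _ = B ^ (((k + 1 : ℤ)) : ℝ) := by norm_num
      refine ⟨hy, ?_, ?_⟩
      · rw [hBk k]
        rw [hr, le_div_iff₀ hy] at hlow
        linarith
      · have : t ^ (2 * k + 2) = B ^ (k + 1) := by
          rw [show 2 * k + 2 = 2 * (k + 1) by ring, hBk (k + 1)]
        rw [this]
        rw [hr, div_lt_iff₀ hy] at hhigh
        linarith
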